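/- arXiv:2509.14158 — 3 statements merged into one kernel-verified Lean document; each statement's English description precedes it below -/
import Mathlib

section
/- Let k ∈ L¹(ℝᵈ) be even, strictly positive almost everywhere, with ∫ k = 1, let K(x) = ∫_{ℝᵈ} k(ω) e^{2πi⟨x,ω⟩} dω, and let H be the associated RKHS with norm ‖f‖²_H = ∫ |g|²/k where f is the inverse Fourier transform of g. Let (X, Y) be a random pair in ℝᵈ × ℝ with E[Y²] < ∞, let (X′,Y′) be an independent copy, and for β ∈ ℝᵈ, λ > 0 set 𝒥(β, λ) := inf_{f ∈ H} ( E[(Y − f(β ∘ X))²] + λ‖f‖²_H ), where β ∘ x is the coordinatewise product. Then for every β ∈ ℝᵈ and λ > 0, 𝒥(β, λ) ≥ E[Y²] − (1/λ) E[Y Y′ K(β ∘ (X − X′))]. -/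
open MeasureTheory Real

/-- The squared error plus ridge penalty objective of compositional kernel ridge
regression, infimized over the RKHS `H` associated to the spectral density `k`:
`𝒥(β, λ) = inf_{f ∈ H} E[(Y − f(β ∘ X))²] + λ‖f‖²_H`, where members of `H` are
parametrized by their Fourier transforms `g` (conjugate-symmetric, integrable,
with `∫ ‖g‖²/k < ∞`), `f_g(x) = ∫ g(ω) e^{2πi⟨x,ω⟩} dω` and `‖f_g‖²_H = ∫ ‖g‖²/k`. -/
noncomputable def Jobj {d : ℕ} {Ω : Type} [MeasureSpace Ω]
    (k : (Fin d → ℝ) → ℝ) (X : Ω → Fin d → ℝ) (Y : Ω → ℝ)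
    (β : Fin d → ℝ) (lam : ℝ) : ℝ :=
  sInf {r : ℝ | ∃ g : (Fin d → ℝ) → ℂ,
    Integrable g volume ∧
    (∀ ω, g (-ω) = starRingEnd ℂ (g ω)) ∧
    Integrable (fun ω : Fin d → ℝ => ‖g ω‖ ^ 2 / k ω) volume ∧
    r = (∫ p, (Y p - (∫ ω : Fin d → ℝ, g ω *
            Complex.exp (2 * π * Complex.I *
              ((∑ j, (β j * X p j) * ω j : ℝ) : ℂ))).re) ^ 2 ∂volume)
        + lam * ∫ ω : Fin d → ℝ, ‖g ω‖ ^ 2 / k ω}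

-- helper lemmas
noncomputable def eker {d : ℕ} (x ω : Fin d → ℝ) : ℂ :=
  Complex.exp (2 * π * Complex.I * ((∑ j, x j * ω j : ℝ) : ℂ))

lemma norm_eker {d : ℕ} (x ω : Fin d → ℝ) : ‖eker x ω‖ = 1 := by
  rw [eker, Complex.norm_exp]
  have : (2 * (π:ℂ) * Complex.I * ((∑ j, x j * ω j : ℝ) : ℂ)).re = 0 := by
    simp [Complex.mul_re, Complex.mul_im]
  rw [this, Real.exp_zero]

lemma eker_mul {d : ℕ} (x y ω : Fin d → ℝ) : eker x ω * eker y ω = eker (x + y) ω := by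
  rw [eker, eker, eker, ← Complex.exp_add]
  congr 1
  have : (∑ j, (x + y) j * ω j : ℝ) = (∑ j, x j * ω j) + (∑ j, y j * ω j) := by
    rw [← Finset.sum_add_distrib]; congr 1; ext j; simp [add_mul]
  rw [this]; push_cast; ring

lemma conj_eker {d : ℕ} (x ω : Fin d → ℝ) :
    starRingEnd ℂ (eker x ω) = eker (-x) ω := by
  rw [eker, eker, ← Complex.exp_conj]
  congr 1
  have : (∑ j, (-x) j * ω j : ℝ) = -(∑ j, x j * ω j) := by
    rw [← Finset.sum_neg_distrib]; congr 1; ext j; simp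
  rw [this]
  simp only [map_mul, Complex.conj_I, Complex.conj_ofReal, map_ofNat]
  push_cast
  ring

lemma continuous_eker {d : ℕ} :
    Continuous (fun q : (Fin d → ℝ) × (Fin d → ℝ) => eker q.1 q.2) := by
  unfold eker
  refine Complex.continuous_exp.comp (continuous_const.mul ?_)
  refine Complex.continuous_ofReal.comp ?_
  exact continuous_finset_sum _ fun j _ =>
    ((continuous_apply j).comp continuous_fst).mul ((continuous_apply j).comp continuous_snd)


variable {d : ℕ} {Ω : Type} [MeasureSpace Ω] [IsProbabilityMeasure (volume : Measure Ω)]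
variable (X : Ω → Fin d → ℝ) (Y : Ω → ℝ) (β : Fin d → ℝ)

noncomputable def phiF (ω : Fin d → ℝ) : ℂ :=
  ∫ p, (Y p : ℂ) * eker (fun j => β j * X p j) ω

omit [IsProbabilityMeasure (volume : Measure Ω)] in
lemma integrand_sm (hX : Measurable X) (hY : Measurable Y) :
    StronglyMeasurable fun q : Ω × (Fin d → ℝ) =>
      (Y q.1 : ℂ) * eker (fun j => β j * X q.1 j) q.2 := by
  apply Measurable.stronglyMeasurable
  have h1 : Measurable fun q : Ω × (Fin d → ℝ) => (Y q.1 : ℂ) :=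
    Complex.measurable_ofReal.comp (hY.comp measurable_fst)
  have he := (continuous_eker (d := d)).measurable
  have hb : Measurable (fun p : Ω => (fun j => β j * X p j)) :=
    measurable_pi_lambda _ fun j => measurable_const.mul ((measurable_pi_apply j).comp hX)
  have h2 : Measurable fun q : Ω × (Fin d → ℝ) => eker (fun j => β j * X q.1 j) q.2 := by
    have := he.comp ((hb.comp measurable_fst).prodMk
      (measurable_snd : Measurable fun q : Ω × (Fin d → ℝ) => q.2))
    exact this
  exact h1.mul h2

lemma phiF_sm (hX : Measurable X) (hY : Measurable Y) :
    StronglyMeasurable (phiF X Y β) :=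
  (integrand_sm X Y β hX hY).integral_prod_left'

omit [IsProbabilityMeasure (volume : Measure Ω)] in
lemma phiF_bound (ω : Fin d → ℝ) : ‖phiF X Y β ω‖ ≤ ∫ p, |Y p| := by
  calc ‖phiF X Y β ω‖ ≤ ∫ p, ‖(Y p : ℂ) * eker (fun j => β j * X p j) ω‖ :=
        norm_integral_le_integral_norm _
  _ = ∫ p, |Y p| := by
      congr 1; ext p
      rw [norm_mul, norm_eker, mul_one, Complex.norm_real, Real.norm_eq_abs]

-- step 1 of key identity
lemma key_step1 (ω : Fin d → ℝ) (k : (Fin d → ℝ) → ℝ) :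
    (k ω : ℂ) * ((‖phiF X Y β ω‖ ^ 2 : ℝ) : ℂ)
      = ∫ q : Ω × Ω, (k ω : ℂ) * (((Y q.1 : ℂ) * (Y q.2 : ℂ)) *
          eker (fun j => β j * (X q.1 j - X q.2 j)) ω) ∂(volume.prod volume) := by
  have hsq : ((‖phiF X Y β ω‖ ^ 2 : ℝ) : ℂ)
      = phiF X Y β ω * starRingEnd ℂ (phiF X Y β ω) := by
    rw [Complex.mul_conj]
    norm_cast
    rw [Complex.normSq_eq_norm_sq]
  have hconj : starRingEnd ℂ (phiF X Y β ω)
      = ∫ p, (Y p : ℂ) * eker (fun j => -(β j * X p j)) ω := by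
    rw [phiF, ← integral_conj]
    refine integral_congr_ae (Filter.Eventually.of_forall fun p => ?_)
    beta_reduce
    rw [map_mul, Complex.conj_ofReal, conj_eker]
    rfl
  have hprod : phiF X Y β ω * starRingEnd ℂ (phiF X Y β ω)
      = ∫ q : Ω × Ω, ((Y q.1 : ℂ) * eker (fun j => β j * X q.1 j) ω) *
          ((Y q.2 : ℂ) * eker (fun j => -(β j * X q.2 j)) ω) ∂(volume.prod volume) := by
    rw [hconj, phiF]
    exact (integral_prod_mul _ _).symm
  rw [hsq, hprod, ← integral_const_mul]
  refine integral_congr_ae (Filter.Eventually.of_forall fun q => ?_)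
  have : eker (fun j => β j * X q.1 j) ω * eker (fun j => -(β j * X q.2 j)) ω
      = eker (fun j => β j * (X q.1 j - X q.2 j)) ω := by
    rw [eker_mul]
    congr 1
    funext j
    simp only [Pi.add_apply]
    ring
  beta_reduce
  rw [← this]
  ring


lemma key_identity (k : (Fin d → ℝ) → ℝ) (K : (Fin d → ℝ) → ℝ)
    (hk_int : Integrable k)
    (hK : ∀ x : Fin d → ℝ, (K x : ℂ) = ∫ ω : Fin d → ℝ,
      (k ω : ℂ) * Complex.exp (2 * π * Complex.I * ((∑ j, x j * ω j : ℝ) : ℂ)))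
    (hX : Measurable X) (hY : Measurable Y) (hYint : Integrable Y volume) :
    (∫ ω, k ω * ‖phiF X Y β ω‖ ^ 2)
      = ∫ q : Ω × Ω, Y q.1 * Y q.2 * K (fun j => β j * (X q.1 j - X q.2 j))
          ∂(volume.prod volume) := by
  have hK' : ∀ x : Fin d → ℝ, (K x : ℂ) = ∫ ω : Fin d → ℝ, (k ω : ℂ) * eker x ω := hK
  set F : (Fin d → ℝ) × (Ω × Ω) → ℂ := fun z =>
    (k z.1 : ℂ) * (((Y z.2.1 : ℂ) * (Y z.2.2 : ℂ)) *
      eker (fun j => β j * (X z.2.1 j - X z.2.2 j)) z.1) with hF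
  have hF_aesm : AEStronglyMeasurable F ((volume : Measure (Fin d → ℝ)).prod
      ((volume : Measure Ω).prod volume)) := by
    have hk1 : AEStronglyMeasurable (fun z : (Fin d → ℝ) × (Ω × Ω) => (k z.1 : ℂ))
        ((volume : Measure (Fin d → ℝ)).prod ((volume : Measure Ω).prod volume)) :=
      Complex.continuous_ofReal.comp_aestronglyMeasurable
        (hk_int.aestronglyMeasurable.comp_fst)
    have hb : Measurable (fun z : (Fin d → ℝ) × (Ω × Ω) =>
        (fun j => β j * (X z.2.1 j - X z.2.2 j))) :=
      measurable_pi_lambda _ fun j => measurable_const.mul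
        (((measurable_pi_apply j).comp (hX.comp (measurable_fst.comp measurable_snd))).sub
          ((measurable_pi_apply j).comp (hX.comp (measurable_snd.comp measurable_snd))))
    have h2 : Measurable fun z : (Fin d → ℝ) × (Ω × Ω) =>
        eker (fun j => β j * (X z.2.1 j - X z.2.2 j)) z.1 := by
      have := (continuous_eker (d := d)).measurable.comp
        (hb.prodMk (measurable_fst : Measurable fun z : (Fin d → ℝ) × (Ω × Ω) => z.1))
      exact this
    have hy : Measurable fun z : (Fin d → ℝ) × (Ω × Ω) => (Y z.2.1 : ℂ) * (Y z.2.2 : ℂ) :=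
      (Complex.measurable_ofReal.comp (hY.comp (measurable_fst.comp measurable_snd))).mul
        (Complex.measurable_ofReal.comp (hY.comp (measurable_snd.comp measurable_snd)))
    exact hk1.mul ((hy.mul h2).aestronglyMeasurable)
  have hFint : Integrable F ((volume : Measure (Fin d → ℝ)).prod
      ((volume : Measure Ω).prod volume)) := by
    have base : Integrable (fun z : (Fin d → ℝ) × (Ω × Ω) =>
        (k z.1 : ℂ) * ((Y z.2.1 : ℂ) * (Y z.2.2 : ℂ)))
        ((volume : Measure (Fin d → ℝ)).prod ((volume : Measure Ω).prod volume)) :=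
      (hk_int.ofReal).mul_prod ((hYint.ofReal).mul_prod (hYint.ofReal))
    refine Integrable.mono' base.norm hF_aesm ?_
    refine Filter.Eventually.of_forall fun z => le_of_eq ?_
    rw [hF]
    beta_reduce
    simp only [norm_mul, norm_eker, mul_one]
  have swap : (∫ ω, ∫ q : Ω × Ω, F (ω, q) ∂((volume : Measure Ω).prod volume))
      = ∫ q : Ω × Ω, (∫ ω, F (ω, q)) ∂((volume : Measure Ω).prod volume) :=
    integral_integral_swap hFint
  have inner : ∀ q : Ω × Ω, (∫ ω, F (ω, q))
      = ((Y q.1 : ℂ) * (Y q.2 : ℂ)) * (K (fun j => β j * (X q.1 j - X q.2 j)) : ℂ) := by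
    intro q
    rw [hK']
    rw [← integral_const_mul]
    refine integral_congr_ae (Filter.Eventually.of_forall fun ω => ?_)
    rw [hF]
    beta_reduce
    ring
  have hL : ((∫ ω, k ω * ‖phiF X Y β ω‖ ^ 2 : ℝ) : ℂ)
      = ∫ ω, ∫ q : Ω × Ω, F (ω, q) ∂((volume : Measure Ω).prod volume) := by
    have hcast : ((∫ ω, k ω * ‖phiF X Y β ω‖ ^ 2 : ℝ) : ℂ)
        = ∫ ω, ((k ω * ‖phiF X Y β ω‖ ^ 2 : ℝ) : ℂ) := integral_ofReal.symm
    rw [hcast]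
    refine integral_congr_ae (Filter.Eventually.of_forall fun ω => ?_)
    have h1 := key_step1 X Y β ω k
    rw [hF]
    beta_reduce
    rw [Complex.ofReal_mul]
    exact h1
  have hR : (∫ q : Ω × Ω, (∫ ω, F (ω, q)) ∂((volume : Measure Ω).prod volume))
      = ((∫ q : Ω × Ω, Y q.1 * Y q.2 * K (fun j => β j * (X q.1 j - X q.2 j))
          ∂((volume : Measure Ω).prod volume) : ℝ) : ℂ) := by
    have hcast : ((∫ q : Ω × Ω, Y q.1 * Y q.2 * K (fun j => β j * (X q.1 j - X q.2 j))
          ∂((volume : Measure Ω).prod volume) : ℝ) : ℂ)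
        = ∫ q : Ω × Ω, ((Y q.1 * Y q.2 * K (fun j => β j * (X q.1 j - X q.2 j)) : ℝ) : ℂ)
          ∂((volume : Measure Ω).prod volume) := integral_ofReal.symm
    rw [hcast]
    refine integral_congr_ae (Filter.Eventually.of_forall fun q => ?_)
    beta_reduce
    rw [inner q]
    push_cast
    ring
  have := hL.trans (swap.trans hR)
  exact_mod_cast this

lemma kphi_int (k : (Fin d → ℝ) → ℝ) (hk_int : Integrable k)
    (hX : Measurable X) (hY : Measurable Y) :
    Integrable (fun ω => k ω * ‖phiF X Y β ω‖ ^ 2) := by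
  refine Integrable.mono' (hk_int.abs.const_mul ((∫ p, |Y p|) ^ 2)) ?_ ?_
  · exact hk_int.aestronglyMeasurable.mul
      (((phiF_sm X Y β hX hY).norm.pow 2).aestronglyMeasurable)
  · refine Filter.Eventually.of_forall fun ω => ?_
    rw [Real.norm_eq_abs, abs_mul, abs_pow, abs_norm, mul_comm ((∫ p, |Y p|) ^ 2) _]
    refine mul_le_mul_of_nonneg_left ?_ (abs_nonneg _)
    exact pow_le_pow_left₀ (norm_nonneg _) (phiF_bound X Y β ω) 2

lemma per_g (k : (Fin d → ℝ) → ℝ)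
    (hk_int : Integrable k)
    (hk_pos : ∀ᵐ ω ∂(volume : Measure (Fin d → ℝ)), 0 < k ω)
    (hX : Measurable X) (hY : Measurable Y)
    (hYint : Integrable Y volume) (hY2 : Integrable (fun p => (Y p) ^ 2) volume)
    (lam : ℝ) (hlam : 0 < lam)
    (g : (Fin d → ℝ) → ℂ) (hg : Integrable g volume)
    (hg2 : Integrable (fun ω : Fin d → ℝ => ‖g ω‖ ^ 2 / k ω) volume) :
    (∫ p, (Y p) ^ 2) - (1 / lam) * (∫ ω, k ω * ‖phiF X Y β ω‖ ^ 2)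
      ≤ (∫ p, (Y p - (∫ ω : Fin d → ℝ, g ω * eker (fun j => β j * X p j) ω).re) ^ 2)
        + lam * ∫ ω : Fin d → ℝ, ‖g ω‖ ^ 2 / k ω := by
  have hCY0 : (0:ℝ) ≤ ∫ p, |Y p| := integral_nonneg fun p => abs_nonneg _
  have hCg0 : (0:ℝ) ≤ ∫ ω, ‖g ω‖ := integral_nonneg fun ω => norm_nonneg _
  -- the regression function and its basic properties
  have hfB_bound : ∀ p : Ω, |(∫ ω : Fin d → ℝ, g ω * eker (fun j => β j * X p j) ω).re|
      ≤ ∫ ω, ‖g ω‖ := by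
    intro p
    refine le_trans (Complex.abs_re_le_norm _) ?_
    refine le_trans (norm_integral_le_integral_norm _) (le_of_eq ?_)
    refine integral_congr_ae (Filter.Eventually.of_forall fun ω => ?_)
    beta_reduce
    rw [norm_mul, norm_eker, mul_one]
  have hinner_aesm : AEStronglyMeasurable
      (fun p : Ω => ∫ ω : Fin d → ℝ, g ω * eker (fun j => β j * X p j) ω) volume := by
    have hG : AEStronglyMeasurable
        (fun q : Ω × (Fin d → ℝ) => g q.2 * eker (fun j => β j * X q.1 j) q.2)
        ((volume : Measure Ω).prod volume) := by
      refine AEStronglyMeasurable.mul ?_ ?_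
      · exact hg.aestronglyMeasurable.comp_snd
      · have hb : Measurable (fun p : Ω => (fun j => β j * X p j)) :=
          measurable_pi_lambda _ fun j => measurable_const.mul ((measurable_pi_apply j).comp hX)
        have : Measurable fun q : Ω × (Fin d → ℝ) => eker (fun j => β j * X q.1 j) q.2 := by
          have := (continuous_eker (d := d)).measurable.comp ((hb.comp measurable_fst).prodMk
            (measurable_snd : Measurable fun q : Ω × (Fin d → ℝ) => q.2))
          exact this
        exact this.aestronglyMeasurable
    exact hG.integral_prod_right'
  have hfB_aesm : AEStronglyMeasurable
      (fun p : Ω => (∫ ω : Fin d → ℝ, g ω * eker (fun j => β j * X p j) ω).re) volume :=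
    Complex.continuous_re.comp_aestronglyMeasurable hinner_aesm
  have hfB_int : Integrable
      (fun p : Ω => (∫ ω : Fin d → ℝ, g ω * eker (fun j => β j * X p j) ω).re) volume := by
    refine Integrable.mono' (integrable_const (∫ ω, ‖g ω‖)) hfB_aesm ?_
    exact Filter.Eventually.of_forall fun p => by
      rw [Real.norm_eq_abs]; exact hfB_bound p
  have hfB2_int : Integrable
      (fun p : Ω => ((∫ ω : Fin d → ℝ, g ω * eker (fun j => β j * X p j) ω).re) ^ 2) volume := by
    refine Integrable.mono' (integrable_const ((∫ ω, ‖g ω‖) ^ 2)) (hfB_aesm.pow 2) ?_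
    refine Filter.Eventually.of_forall fun p => ?_
    rw [Real.norm_eq_abs, abs_pow]
    exact pow_le_pow_left₀ (abs_nonneg _) (hfB_bound p) 2
  have hYf_int : Integrable
      (fun p : Ω => Y p * (∫ ω : Fin d → ℝ, g ω * eker (fun j => β j * X p j) ω).re) volume := by
    refine Integrable.mono' (hYint.abs.const_mul (∫ ω, ‖g ω‖)) (hY.aestronglyMeasurable.mul hfB_aesm) ?_
    refine Filter.Eventually.of_forall fun p => ?_
    rw [Real.norm_eq_abs, abs_mul, mul_comm (∫ ω, ‖g ω‖) _]
    exact mul_le_mul_of_nonneg_left (hfB_bound p) (abs_nonneg _)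
  -- expansion of the square
  have hexp : (∫ p, (Y p - (∫ ω : Fin d → ℝ, g ω * eker (fun j => β j * X p j) ω).re) ^ 2)
      = (∫ p, (Y p)^2)
        - 2 * (∫ p, Y p * (∫ ω : Fin d → ℝ, g ω * eker (fun j => β j * X p j) ω).re)
        + ∫ p, ((∫ ω : Fin d → ℝ, g ω * eker (fun j => β j * X p j) ω).re)^2 := by
    have hptw : (fun p : Ω => (Y p - (∫ ω : Fin d → ℝ, g ω * eker (fun j => β j * X p j) ω).re) ^ 2)
        = fun p : Ω => ((Y p)^2 - 2 * (Y p * (∫ ω : Fin d → ℝ, g ω * eker (fun j => β j * X p j) ω).re))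
            + ((∫ ω : Fin d → ℝ, g ω * eker (fun j => β j * X p j) ω).re)^2 := by
      funext p; ring
    have hA : Integrable (fun p : Ω =>
        Y p ^ 2 - 2 * (Y p * (∫ ω : Fin d → ℝ, g ω * eker (fun j => β j * X p j) ω).re)) volume := by
      exact hY2.sub (hYf_int.const_mul 2)
    have e1 := integral_add (μ := (volume : Measure Ω)) hA hfB2_int
    have e2 := integral_sub (μ := (volume : Measure Ω)) hY2 (hYf_int.const_mul 2)
    rw [hptw, e1, e2, integral_const_mul]
  -- joint measurability used for Fubini
  have hG : AEStronglyMeasurable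
      (fun q : Ω × (Fin d → ℝ) => g q.2 * eker (fun j => β j * X q.1 j) q.2)
      ((volume : Measure Ω).prod volume) := by
    refine AEStronglyMeasurable.mul hg.aestronglyMeasurable.comp_snd ?_
    have hb : Measurable (fun p : Ω => (fun j => β j * X p j)) :=
      measurable_pi_lambda _ fun j => measurable_const.mul ((measurable_pi_apply j).comp hX)
    have : Measurable fun q : Ω × (Fin d → ℝ) => eker (fun j => β j * X q.1 j) q.2 := by
      have := (continuous_eker (d := d)).measurable.comp ((hb.comp measurable_fst).prodMk
        (measurable_snd : Measurable fun q : Ω × (Fin d → ℝ) => q.2))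
      exact this
    exact this.aestronglyMeasurable
  have hH_int : Integrable
      (fun z : Ω × (Fin d → ℝ) => (Y z.1 : ℂ) * (g z.2 * eker (fun j => β j * X z.1 j) z.2))
      ((volume : Measure Ω).prod volume) := by
    have base : Integrable (fun z : Ω × (Fin d → ℝ) => (Y z.1 : ℂ) * g z.2)
        ((volume : Measure Ω).prod volume) := (hYint.ofReal).mul_prod hg
    refine Integrable.mono' base.norm ?_ ?_
    · exact (Complex.continuous_ofReal.comp_aestronglyMeasurable
        hY.aestronglyMeasurable).comp_fst.mul hG
    · refine Filter.Eventually.of_forall fun z => le_of_eq ?_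
      beta_reduce
      rw [norm_mul, norm_mul, norm_eker, mul_one, norm_mul]
  have h1 : (∫ p, Y p * (∫ ω : Fin d → ℝ, g ω * eker (fun j => β j * X p j) ω).re)
      = (∫ ω, g ω * phiF X Y β ω).re := by
    have hre : ∀ (r : ℝ) (z : ℂ), ((r : ℂ) * z).re = r * z.re := fun r z => by
      simp [Complex.mul_re]
    have hZ_int : Integrable
        (fun p : Ω => (Y p : ℂ) * ∫ ω : Fin d → ℝ, g ω * eker (fun j => β j * X p j) ω) volume := by
      refine Integrable.mono' (hYint.abs.const_mul (∫ ω, ‖g ω‖)) ?_ ?_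
      · exact (Complex.continuous_ofReal.comp_aestronglyMeasurable
          hY.aestronglyMeasurable).mul hinner_aesm
      · refine Filter.Eventually.of_forall fun p => ?_
        beta_reduce
        rw [norm_mul, Complex.norm_real, Real.norm_eq_abs, mul_comm (∫ ω, ‖g ω‖) _]
        refine mul_le_mul_of_nonneg_left ?_ (abs_nonneg _)
        refine le_trans (norm_integral_le_integral_norm _) (le_of_eq ?_)
        refine integral_congr_ae (Filter.Eventually.of_forall fun ω => ?_)
        beta_reduce
        rw [norm_mul, norm_eker, mul_one]
    have step1 : (∫ p, Y p * (∫ ω : Fin d → ℝ, g ω * eker (fun j => β j * X p j) ω).re)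
        = (∫ p, (Y p : ℂ) * ∫ ω : Fin d → ℝ, g ω * eker (fun j => β j * X p j) ω).re := by
      have h' : (∫ p, ((Y p : ℂ) * ∫ ω : Fin d → ℝ, g ω * eker (fun j => β j * X p j) ω).re)
          = (∫ p, (Y p : ℂ) * ∫ ω : Fin d → ℝ, g ω * eker (fun j => β j * X p j) ω).re :=
        integral_re hZ_int
      rw [← h']
      refine integral_congr_ae (Filter.Eventually.of_forall fun p => ?_)
      beta_reduce
      rw [hre]
    have step2 : (∫ p, (Y p : ℂ) * ∫ ω : Fin d → ℝ, g ω * eker (fun j => β j * X p j) ω)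
        = ∫ ω, g ω * phiF X Y β ω := by
      have swap := integral_integral_swap
        (f := fun (p : Ω) (ω : Fin d → ℝ) => (Y p : ℂ) * (g ω * eker (fun j => β j * X p j) ω))
        hH_int
      calc (∫ p, (Y p : ℂ) * ∫ ω : Fin d → ℝ, g ω * eker (fun j => β j * X p j) ω)
          = ∫ p, ∫ ω : Fin d → ℝ, (Y p : ℂ) * (g ω * eker (fun j => β j * X p j) ω) := by
            refine integral_congr_ae (Filter.Eventually.of_forall fun p => ?_)
            beta_reduce
            rw [integral_const_mul]
        _ = ∫ ω : Fin d → ℝ, ∫ p, (Y p : ℂ) * (g ω * eker (fun j => β j * X p j) ω) := swap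
        _ = ∫ ω, g ω * phiF X Y β ω := by
            refine integral_congr_ae (Filter.Eventually.of_forall fun ω => ?_)
            beta_reduce
            rw [phiF, ← integral_const_mul]
            refine integral_congr_ae (Filter.Eventually.of_forall fun p => ?_)
            beta_reduce
            ring
    rw [step1, step2]
  -- bounding the cross term
  have hgφ_int : Integrable (fun ω => ‖g ω‖ * ‖phiF X Y β ω‖) := by
    refine Integrable.mono' (hg.norm.const_mul (∫ p, |Y p|)) ?_ ?_
    · exact hg.norm.aestronglyMeasurable.mul
        ((phiF_sm X Y β hX hY).norm.aestronglyMeasurable)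
    · refine Filter.Eventually.of_forall fun ω => ?_
      rw [Real.norm_eq_abs, abs_mul, abs_norm, abs_norm, mul_comm (∫ p, |Y p|) _]
      exact mul_le_mul_of_nonneg_left (phiF_bound X Y β ω) (norm_nonneg _)
  have habs : |(∫ ω, g ω * phiF X Y β ω).re| ≤ ∫ ω, ‖g ω‖ * ‖phiF X Y β ω‖ := by
    refine le_trans (Complex.abs_re_le_norm _) ?_
    refine le_trans (norm_integral_le_integral_norm _) (le_of_eq ?_)
    refine integral_congr_ae (Filter.Eventually.of_forall fun ω => ?_)
    beta_reduce
    rw [norm_mul]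
  have hkφ := kphi_int X Y β k hk_int hX hY
  -- pointwise AM-GM and integration
  have h3 : 2 * (∫ ω, ‖g ω‖ * ‖phiF X Y β ω‖)
      ≤ lam * (∫ ω : Fin d → ℝ, ‖g ω‖ ^ 2 / k ω)
        + (1 / lam) * (∫ ω, k ω * ‖phiF X Y β ω‖ ^ 2) := by
    have hpt : ∀ᵐ ω ∂(volume : Measure (Fin d → ℝ)),
        2 * (‖g ω‖ * ‖phiF X Y β ω‖)
          ≤ lam * (‖g ω‖ ^ 2 / k ω) + (1 / lam) * (k ω * ‖phiF X Y β ω‖ ^ 2) := by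
      filter_upwards [hk_pos] with ω hω
      have hid : lam * (‖g ω‖ ^ 2 / k ω) + (1 / lam) * (k ω * ‖phiF X Y β ω‖ ^ 2)
            - 2 * (‖g ω‖ * ‖phiF X Y β ω‖)
          = (lam * ‖g ω‖ - k ω * ‖phiF X Y β ω‖) ^ 2 / (lam * k ω) := by
        field_simp
        ring
      have hnn : 0 ≤ (lam * ‖g ω‖ - k ω * ‖phiF X Y β ω‖) ^ 2 / (lam * k ω) :=
        div_nonneg (sq_nonneg _) (mul_pos hlam hω).le
      linarith [hid ▸ hnn]
    have hRint : Integrable (fun ω : Fin d → ℝ =>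
        lam * (‖g ω‖ ^ 2 / k ω) + (1 / lam) * (k ω * ‖phiF X Y β ω‖ ^ 2)) volume := by
      exact (hg2.const_mul lam).add (hkφ.const_mul (1 / lam))
    have hLint : Integrable (fun ω : Fin d → ℝ => 2 * (‖g ω‖ * ‖phiF X Y β ω‖)) volume := by
      exact hgφ_int.const_mul 2
    have h4 := integral_mono_ae hLint hRint hpt
    rw [integral_add (hg2.const_mul lam) (hkφ.const_mul (1 / lam))] at h4
    rw [integral_const_mul (2:ℝ)] at h4
    rw [integral_const_mul lam] at h4
    rw [integral_const_mul (1/lam)] at h4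
    exact h4
  have hf2 : (0:ℝ) ≤ ∫ p, ((∫ ω : Fin d → ℝ, g ω * eker (fun j => β j * X p j) ω).re)^2 :=
    integral_nonneg fun p => sq_nonneg _
  have hcross : (∫ ω, g ω * phiF X Y β ω).re ≤ ∫ ω, ‖g ω‖ * ‖phiF X Y β ω‖ :=
    le_trans (le_abs_self _) habs
  linarith [hexp, h1, h3, hf2, hcross]


/-- lower bound on the kernel ridge regression value:
`𝒥(β, λ) ≥ E[Y²] − (1/λ) E[Y Y' K(β ∘ (X − X'))]`. -/
theorem stmt6 {d : ℕ} (hd : 1 ≤ d)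
    (k : (Fin d → ℝ) → ℝ) (hk_int : Integrable k)
    (hk_even : ∀ ω, k (-ω) = k ω)
    (hk_pos : ∀ᵐ ω ∂(volume : Measure (Fin d → ℝ)), 0 < k ω)
    (hk_one : ∫ ω : Fin d → ℝ, k ω = 1)
    (K : (Fin d → ℝ) → ℝ)
    (hK : ∀ x : Fin d → ℝ, (K x : ℂ) = ∫ ω : Fin d → ℝ,
      (k ω : ℂ) * Complex.exp (2 * π * Complex.I * ((∑ j, x j * ω j : ℝ) : ℂ)))
    {Ω : Type} [MeasureSpace Ω] [IsProbabilityMeasure (volume : Measure Ω)]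
    (X : Ω → Fin d → ℝ) (Y : Ω → ℝ) (hX : Measurable X) (hY : Measurable Y)
    (hY2 : Integrable (fun p => (Y p) ^ 2) volume)
    (β : Fin d → ℝ) (lam : ℝ) (hlam : 0 < lam) :
    Jobj k X Y β lam ≥
      (∫ p, (Y p) ^ 2 ∂volume) -
        (1 / lam) * ∫ p : Ω × Ω,
          Y p.1 * Y p.2 * K (fun j => β j * (X p.1 j - X p.2 j)) ∂(volume.prod volume) := by
  have hYint : Integrable Y volume := by
    have h2 : MemLp Y 2 volume := (memLp_two_iff_integrable_sq hY.aestronglyMeasurable).mpr hY2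
    exact memLp_one_iff_integrable.mp (h2.mono_exponent one_le_two)
  have hkey := key_identity X Y β k K hk_int hK hX hY hYint
  have hkφ0 : 0 ≤ ∫ ω, k ω * ‖phiF X Y β ω‖ ^ 2 := by
    refine integral_nonneg_of_ae ?_
    filter_upwards [hk_pos] with ω hω
    positivity
  rw [Jobj, ge_iff_le]
  refine le_csInf ⟨∫ p, (Y p) ^ 2 ∂volume, 0, integrable_zero _ _ _, fun ω => by simp, ?_, ?_⟩ ?_
  · have hz : (fun ω : Fin d → ℝ => ‖(0 : (Fin d → ℝ) → ℂ) ω‖ ^ 2 / k ω)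
        = fun _ : Fin d → ℝ => (0:ℝ) := by
      funext ω; simp
    rw [hz]
    exact integrable_zero _ _ _
  · simp
  · intro r hr
    obtain ⟨g, hg, hsym, hg2, hre⟩ := hr
    rw [hre, ← hkey]
    exact per_g X Y β k hk_int hk_pos hX hY hYint hY2 lam hlam g hg hg2
end

section
/- Let (X, Y) be a random pair in ℝᵈ × ℝ with E[Y²] < ∞, where the law of X is absolutely continuous with respect to Lebesgue measure on ℝᵈ, and let (X′, Y′) be an independent copy. Let K : ℝᵈ → ℝ be bounded and continuous with K(z) → 0 as ‖z‖ → ∞. Then E[Y Y′ K(β ∘ (X − X′))] → 0 as ‖β‖ → ∞. -/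
open MeasureTheory Filter Real

/-- If the law of `X` is absolutely continuous with respect to Lebesgue
measure, `K` is bounded continuous with `K(z) → 0` at infinity, and `E[Y²] < ∞`, then
`E[Y Y' K(β ∘ (X − X'))] → 0` as `‖β‖ → ∞`. -/
theorem stmt7 {d : ℕ} (hd : 1 ≤ d)
    {Ω : Type} [MeasureSpace Ω] [IsProbabilityMeasure (volume : Measure Ω)]
    (X : Ω → Fin d → ℝ) (Y : Ω → ℝ) (hX : Measurable X) (hY : Measurable Y)
    (hY2 : Integrable (fun p => (Y p) ^ 2) volume)
    (hXac : (volume : Measure Ω).map X ≪ (volume : Measure (Fin d → ℝ)))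
    (K : (Fin d → ℝ) → ℝ)
    (hKcont : Continuous K)
    (hKbdd : ∃ C : ℝ, ∀ z, |K z| ≤ C)
    (hKzero : Tendsto K (cocompact (Fin d → ℝ)) (nhds 0)) :
    Tendsto (fun β : Fin d → ℝ =>
        ∫ p : Ω × Ω, Y p.1 * Y p.2 * K (fun j => β j * (X p.1 j - X p.2 j))
          ∂(volume.prod volume))
      (cocompact (Fin d → ℝ)) (nhds 0) := by
  have hcg : (cocompact (Fin d → ℝ)).IsCountablyGenerated := by
    rw [← Metric.cobounded_eq_cocompact, ← comap_norm_atTop]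
    infer_instance
  obtain ⟨C, hC⟩ := hKbdd
  -- `Y` is integrable since it is in `L²` on a probability space.
  have hYm : MemLp Y 2 (volume : Measure Ω) :=
    (memLp_two_iff_integrable_sq hY.aestronglyMeasurable).2 hY2
  have hYint : Integrable Y (volume : Measure Ω) := hYm.integrable one_le_two
  set ν : Measure (Fin d → ℝ) := (volume : Measure Ω).map X with hν
  have hνprob : IsProbabilityMeasure ν := Measure.isProbabilityMeasure_map hX.aemeasurable
  -- a.e. all coordinates of `X p.1 - X p.2` are nonzero
  have hnull : ∀ j : Fin d,
      (volume.prod volume) {p : Ω × Ω | X p.1 j = X p.2 j} = 0 := by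
    intro j
    set S : Set ((Fin d → ℝ) × (Fin d → ℝ)) := {q | q.1 j = q.2 j} with hSdef
    have hS : MeasurableSet S :=
      measurableSet_eq_fun (by fun_prop) (by fun_prop)
    have hset : {p : Ω × Ω | X p.1 j = X p.2 j} = (Prod.map X X) ⁻¹' S := rfl
    have hmap : (volume.prod volume).map (Prod.map X X) = ν.prod ν := by
      rw [hν, Measure.map_prod_map _ _ hX hX]
    rw [hset, ← Measure.map_apply (hX.prodMap hX) hS, hmap]
    rw [Measure.prod_apply hS]
    have hslice : ∀ a : Fin d → ℝ, ν (Prod.mk a ⁻¹' S) = 0 := by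
      intro a
      have h1 : Prod.mk a ⁻¹' S = {b : Fin d → ℝ | b j = a j} := by
        ext b; exact eq_comm
      have h2 : (volume : Measure (Fin d → ℝ)) {b : Fin d → ℝ | b j = a j} = 0 := by
        rw [volume_pi]
        exact Measure.pi_hyperplane (fun _ : Fin d => (volume : Measure ℝ)) j (a j)
      rw [h1]
      exact hXac h2
    simp [hslice]
  have hae : ∀ᵐ p : Ω × Ω ∂(volume.prod volume), ∀ j : Fin d, X p.1 j ≠ X p.2 j := by
    rw [ae_all_iff]
    intro j
    rw [ae_iff]
    simpa using hnull j
  -- dominated convergence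
  have hDCT := tendsto_integral_filter_of_dominated_convergence
    (μ := volume.prod volume) (l := cocompact (Fin d → ℝ))
    (F := fun β (p : Ω × Ω) => Y p.1 * Y p.2 * K (fun j => β j * (X p.1 j - X p.2 j)))
    (f := fun _ => (0 : ℝ))
    (bound := fun p : Ω × Ω => C * (|Y p.1| * |Y p.2|))
    (Eventually.of_forall fun β => by
      refine (((hY.comp measurable_fst).mul (hY.comp measurable_snd)).mul
        (hKcont.measurable.comp ?_)).aestronglyMeasurable
      exact measurable_pi_lambda _ fun j =>
        measurable_const.mul (((measurable_pi_apply j).comp (hX.comp measurable_fst)).sub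
          ((measurable_pi_apply j).comp (hX.comp measurable_snd))))
    (Eventually.of_forall fun β => Eventually.of_forall fun p => by
      have h1 : ‖Y p.1 * Y p.2 * K (fun j => β j * (X p.1 j - X p.2 j))‖
          = |Y p.1| * |Y p.2| * |K (fun j => β j * (X p.1 j - X p.2 j))| := by
        rw [Real.norm_eq_abs, abs_mul, abs_mul]
      show ‖Y p.1 * Y p.2 * K (fun j => β j * (X p.1 j - X p.2 j))‖
          ≤ C * (|Y p.1| * |Y p.2|)
      rw [h1, mul_comm C]
      exact mul_le_mul_of_nonneg_left (hC _) (mul_nonneg (abs_nonneg _) (abs_nonneg _)))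
    ((hYint.abs.mul_prod hYint.abs).const_mul C)
    (by
      filter_upwards [hae] with p hp
      have hv : ∀ j : Fin d, X p.1 j - X p.2 j ≠ 0 := fun j => sub_ne_zero.2 (hp j)
      set e : (Fin d → ℝ) ≃ₜ (Fin d → ℝ) :=
        Homeomorph.piCongrRight fun j => Homeomorph.mulRight₀ (X p.1 j - X p.2 j) (hv j)
        with he
      have hec : Tendsto e (cocompact (Fin d → ℝ)) (cocompact (Fin d → ℝ)) :=
        e.map_cocompact.le
      have hKtendsto : Tendsto (fun β : Fin d → ℝ =>
          K (fun j => β j * (X p.1 j - X p.2 j))) (cocompact (Fin d → ℝ)) (nhds 0) :=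
        hKzero.comp hec
      have := hKtendsto.const_mul (Y p.1 * Y p.2)
      simpa [mul_assoc] using this)
  simpa using hDCT
end

section
/- Let k ∈ L¹(ℝᵈ) be even, strictly positive almost everywhere, with ∫ k = 1, let H be the associated RKHS, and let (X, Y) be a random pair in ℝᵈ × ℝ with E[Y²] < ∞. Define 𝒥(β, λ) := inf_{f ∈ H} ( E[(Y − f(β ∘ X))²] + λ‖f‖²_H ). Then for every λ > 0, the map β ↦ 𝒥(β, λ) is continuous on ℝᵈ. -/
open MeasureTheory Real

section Aux

lemma aux_exp_one (t : ℝ) : ‖Complex.exp ((t:ℂ) * Complex.I) - 1‖ ≤ min 2 (2*|t|) := by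
  have habs : ‖(t:ℂ) * Complex.I‖ = |t| := by
    rw [norm_mul, Complex.norm_I, mul_one, Complex.norm_real, Real.norm_eq_abs]
  have h2 : ‖Complex.exp ((t:ℂ) * Complex.I) - 1‖ ≤ 2 := by
    calc ‖Complex.exp ((t:ℂ) * Complex.I) - 1‖ ≤ ‖Complex.exp ((t:ℂ) * Complex.I)‖ + ‖(1:ℂ)‖ :=
          norm_sub_le _ _
      _ ≤ 2 := by
          rw [Complex.norm_exp_ofReal_mul_I, norm_one]; norm_num
  refine le_min h2 ?_
  rcases le_or_gt (|t|) 1 with h | h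
  · have := Complex.norm_exp_sub_one_le (x := (t:ℂ) * Complex.I) (by rw [habs]; exact h)
    rw [habs] at this
    simpa using this
  · exact h2.trans (by nlinarith)

lemma aux_expdiff (a b : ℝ) :
    ‖Complex.exp (2*π*Complex.I*(a:ℂ)) - Complex.exp (2*π*Complex.I*(b:ℂ))‖
      ≤ min 2 (4*π*|a-b|) := by
  have hsplit : Complex.exp (2*π*Complex.I*(a:ℂ))
      = Complex.exp (2*π*Complex.I*(b:ℂ)) * Complex.exp (((2*π*(a-b):ℝ):ℂ) * Complex.I) := by
    rw [← Complex.exp_add]; ring_nf; push_cast; ring_nf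
  rw [hsplit]
  have heq : Complex.exp (2*π*Complex.I*(b:ℂ)) * Complex.exp (((2*π*(a-b):ℝ):ℂ) * Complex.I)
      - Complex.exp (2*π*Complex.I*(b:ℂ))
      = Complex.exp (2*π*Complex.I*(b:ℂ)) * (Complex.exp (((2*π*(a-b):ℝ):ℂ) * Complex.I) - 1) := by
    ring
  rw [heq, norm_mul]
  have hb : ‖Complex.exp (2*π*Complex.I*(b:ℂ))‖ = 1 := by
    have : (2*π*Complex.I*(b:ℂ)) = ((2*π*b : ℝ):ℂ) * Complex.I := by push_cast; ring
    rw [this, Complex.norm_exp_ofReal_mul_I]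
  rw [hb, one_mul]
  have hmain := aux_exp_one (2*π*(a-b))
  have habs : |2*π*(a-b)| = 2*π*|a-b| := by
    rw [abs_mul]
    congr 1
    rw [abs_of_nonneg (by positivity)]
  rw [habs] at hmain
  calc ‖Complex.exp (((2*π*(a-b):ℝ):ℂ) * Complex.I) - 1‖ ≤ min 2 (2*(2*π*|a-b|)) := hmain
    _ ≤ min 2 (4*π*|a-b|) := by apply min_le_min le_rfl; ring_nf; exact le_rfl

open Filter in
lemma aux_tail {α : Type*} [MeasurableSpace α] {ν : Measure α} {φ : α → ℝ}
    (hφ : Integrable φ ν) {ρ : α → ℝ} (hρ : Measurable ρ) {ε : ℝ} (hε : 0 < ε) :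
    ∃ n : ℕ, 1 ≤ n ∧ ∫ x, Set.indicator {x | (n:ℝ) < ρ x} φ x ∂ν < ε := by
  have hmeas : ∀ n : ℕ, MeasurableSet {x | (n:ℝ) < ρ x} :=
    fun n => measurableSet_lt measurable_const hρ
  have htend : Tendsto (fun n : ℕ => ∫ x, Set.indicator {x | (n:ℝ) < ρ x} φ x ∂ν)
      atTop (nhds (∫ x, (0:ℝ) ∂ν)) := by
    apply tendsto_integral_of_dominated_convergence (bound := fun x => |φ x|)
    · exact fun n => hφ.1.indicator (hmeas n)
    · exact hφ.abs
    · intro n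
      filter_upwards with x
      exact (norm_indicator_le_norm_self φ x).trans (le_of_eq (Real.norm_eq_abs _))
    · filter_upwards with x
      apply tendsto_const_nhds.congr'
      filter_upwards [eventually_ge_atTop ⌈ρ x⌉₊] with n hn
      rw [Set.indicator_of_notMem]
      simp only [Set.mem_setOf_eq, not_lt]
      exact (Nat.le_ceil (ρ x)).trans (by exact_mod_cast hn)
  rw [integral_zero] at htend
  obtain ⟨n, hn1, hn2⟩ := ((htend.eventually (eventually_lt_nhds hε)).and
    (eventually_ge_atTop 1)).exists
  exact ⟨n, hn2, hn1⟩

lemma aux_amgm {d : ℕ} {k : (Fin d → ℝ) → ℝ}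
    (hk_int : Integrable k) (hk_pos : ∀ᵐ ω ∂(volume : Measure (Fin d → ℝ)), 0 < k ω)
    {g : (Fin d → ℝ) → ℂ} (hg : Integrable g volume)
    (hgk : Integrable (fun ω : Fin d → ℝ => ‖g ω‖ ^ 2 / k ω) volume)
    {S : Set (Fin d → ℝ)} (hS : MeasurableSet S) {t : ℝ} (ht : 0 < t) :
    ∫ ω, Set.indicator S (fun ω => ‖g ω‖) ω ≤
      (t * (∫ ω : Fin d → ℝ, ‖g ω‖ ^ 2 / k ω) + (1/t) * ∫ ω, Set.indicator S k ω) / 2 := by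
  have hint1 : Integrable (fun ω => Set.indicator S (fun ω => ‖g ω‖) ω) volume :=
    hg.norm.indicator hS
  have hint2 : Integrable (fun ω : Fin d → ℝ =>
      (t * (‖g ω‖ ^ 2 / k ω) + (1/t) * Set.indicator S k ω) / 2) volume :=
    ((hgk.const_mul t).add ((hk_int.indicator hS).const_mul (1/t))).div_const 2
  have hmono : ∫ ω, Set.indicator S (fun ω => ‖g ω‖) ω ≤
      ∫ ω : Fin d → ℝ, (t * (‖g ω‖ ^ 2 / k ω) + (1/t) * Set.indicator S k ω) / 2 := by
    apply integral_mono_ae hint1 hint2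
    filter_upwards [hk_pos] with ω hkω
    have ha0 : (0:ℝ) ≤ ‖g ω‖ := norm_nonneg _
    have hquot : 0 ≤ ‖g ω‖ ^ 2 / k ω := div_nonneg (by positivity) hkω.le
    by_cases h : ω ∈ S
    · simp only [Set.indicator_of_mem h]
      set a := ‖g ω‖ with ha
      have hmul : a ^ 2 / k ω * k ω = a ^ 2 := div_mul_cancel₀ _ (ne_of_gt hkω)
      have h2 : 2 * a * (t * k ω) ≤ (t * (a ^ 2 / k ω) + 1 / t * k ω) * (t * k ω) := by
        have e2 : t * (a ^ 2 / k ω) * (t * k ω) = t ^ 2 * a ^ 2 := by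
          field_simp
        have e3 : 1 / t * k ω * (t * k ω) = k ω ^ 2 := by
          field_simp
        nlinarith [sq_nonneg (t * a - k ω)]
      have h3 : 2 * a ≤ t * (a ^ 2 / k ω) + 1 / t * k ω :=
        le_of_mul_le_mul_right h2 (mul_pos ht hkω)
      linarith
    · simp only [Set.indicator_of_notMem h]
      have h1 : 0 ≤ t * (‖g ω‖ ^ 2 / k ω) := mul_nonneg ht.le hquot
      have h2 : (1:ℝ)/t * 0 = 0 := by ring
      linarith
  refine hmono.trans (le_of_eq ?_)
  rw [integral_div, integral_add (hgk.const_mul t) ((hk_int.indicator hS).const_mul (1/t)),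
    MeasureTheory.integral_const_mul, MeasureTheory.integral_const_mul]

lemma mul_abs_le' {u v a b : ℝ} (h1 : |u| ≤ a) (h2 : |v| ≤ b) : u * v ≤ a * b := by
  calc u * v ≤ |u * v| := le_abs_self _
    _ = |u| * |v| := abs_mul u v
    _ ≤ a * b := mul_le_mul h1 h2 (abs_nonneg _) ((abs_nonneg u).trans h1)

noncomputable def Fv {d : ℕ} {Ω : Type} [MeasureSpace Ω] (X : Ω → Fin d → ℝ)
    (β : Fin d → ℝ) (g : (Fin d → ℝ) → ℂ) (p : Ω) : ℝ :=
  (∫ ω : Fin d → ℝ, g ω * Complex.exp (2 * π * Complex.I *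
      ((∑ j, (β j * X p j) * ω j : ℝ) : ℂ))).re

lemma kernel_norm (r : ℝ) : ‖Complex.exp (2 * π * Complex.I * (r:ℂ))‖ = 1 := by
  have : (2 * π * Complex.I * (r:ℂ)) = ((2 * π * r : ℝ) : ℂ) * Complex.I := by push_cast; ring
  rw [this, Complex.norm_exp_ofReal_mul_I]

lemma kernel_meas {d : ℕ} (x : Fin d → ℝ) :
    Measurable (fun ω : Fin d → ℝ => Complex.exp (2 * π * Complex.I *
      ((∑ j, x j * ω j : ℝ) : ℂ))) := by
  apply Complex.measurable_exp.comp
  apply Measurable.const_mul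
  apply Complex.measurable_ofReal.comp
  exact Finset.measurable_sum _ (fun j _ => (measurable_pi_apply j).const_mul _)

lemma gker_integrable {d : ℕ} {Ω : Type} [MeasureSpace Ω] (X : Ω → Fin d → ℝ)
    (β : Fin d → ℝ) {g : (Fin d → ℝ) → ℂ} (hg : Integrable g volume) (p : Ω) :
    Integrable (fun ω : Fin d → ℝ => g ω * Complex.exp (2 * π * Complex.I *
      ((∑ j, (β j * X p j) * ω j : ℝ) : ℂ))) volume := by
  refine Integrable.mono' hg.norm (hg.1.mul ?_) ?_
  · exact (kernel_meas (fun j => β j * X p j)).aestronglyMeasurable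
  · filter_upwards with ω
    rw [norm_mul, kernel_norm, mul_one]

lemma Fv_le {d : ℕ} {Ω : Type} [MeasureSpace Ω] (X : Ω → Fin d → ℝ)
    (β : Fin d → ℝ) (g : (Fin d → ℝ) → ℂ) (p : Ω) :
    |Fv X β g p| ≤ ∫ ω : Fin d → ℝ, ‖g ω‖ := by
  refine (Complex.abs_re_le_norm _).trans ?_
  refine (norm_integral_le_integral_norm _).trans (le_of_eq ?_)
  congr 1
  funext ω
  rw [norm_mul, kernel_norm, mul_one]

lemma Fv_aesm {d : ℕ} {Ω : Type} [MeasureSpace Ω]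
    [IsProbabilityMeasure (volume : Measure Ω)]
    (X : Ω → Fin d → ℝ) (hX : Measurable X) (β : Fin d → ℝ)
    {g : (Fin d → ℝ) → ℂ} (hg : Integrable g volume) :
    AEStronglyMeasurable (fun p => Fv X β g p) (volume : Measure Ω) := by
  have hΦ : AEStronglyMeasurable
      (fun q : Ω × (Fin d → ℝ) => g q.2 * Complex.exp (2 * π * Complex.I *
        ((∑ j, (β j * X q.1 j) * q.2 j : ℝ) : ℂ)))
      ((volume : Measure Ω).prod (volume : Measure (Fin d → ℝ))) := by
    refine (hg.1.comp_snd).mul (Measurable.aestronglyMeasurable ?_)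
    apply Complex.measurable_exp.comp
    apply Measurable.const_mul
    apply Complex.measurable_ofReal.comp
    refine Finset.measurable_sum _ (fun j _ => Measurable.mul ?_ ?_)
    · exact ((measurable_pi_apply j).comp (hX.comp measurable_fst)).const_mul _
    · exact (measurable_pi_apply j).comp measurable_snd
  exact Complex.continuous_re.comp_aestronglyMeasurable hΦ.integral_prod_right'

lemma Err_integrand_integrable {d : ℕ} {Ω : Type} [MeasureSpace Ω]
    [IsProbabilityMeasure (volume : Measure Ω)]
    (X : Ω → Fin d → ℝ) (hX : Measurable X) {Y : Ω → ℝ} (hY : Measurable Y)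
    (hY2 : Integrable (fun p => (Y p) ^ 2) volume) (β : Fin d → ℝ)
    {g : (Fin d → ℝ) → ℂ} (hg : Integrable g volume) :
    Integrable (fun p => (Y p - Fv X β g p) ^ 2) volume := by
  set L : ℝ := ∫ ω : Fin d → ℝ, ‖g ω‖ with hL
  refine Integrable.mono' ((hY2.const_mul 2).add (integrable_const (2 * L ^ 2)))
    ((hY.aestronglyMeasurable.sub (Fv_aesm X hX β hg)).pow 2) ?_
  filter_upwards with p
  have hF := Fv_le X β g p
  have h1 : |Fv X β g p| ^ 2 ≤ L ^ 2 := by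
    apply pow_le_pow_left₀ (abs_nonneg _) hF
  rw [Real.norm_eq_abs, abs_of_nonneg (sq_nonneg _)]
  show (Y p - Fv X β g p) ^ 2 ≤ 2 * Y p ^ 2 + 2 * L ^ 2
  nlinarith [sq_nonneg (Y p + Fv X β g p), sq_abs (Fv X β g p)]

lemma Fv_diff_le {d : ℕ} {Ω : Type} [MeasureSpace Ω] (X : Ω → Fin d → ℝ)
    (β β' : Fin d → ℝ) {g : (Fin d → ℝ) → ℂ} (hg : Integrable g volume) (p : Ω)
    {R : ℝ} (hR : 0 < R) :
    |Fv X β g p - Fv X β' g p| ≤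
      (∫ ω : Fin d → ℝ, ‖g ω‖) * (4 * π * ((d:ℝ) * (‖β - β'‖ * ‖X p‖)) * R)
        + 2 * ∫ ω : Fin d → ℝ,
            Set.indicator {ω : Fin d → ℝ | R < ‖ω‖} (fun ω => ‖g ω‖) ω := by
  set c : ℝ := 4 * π * ((d:ℝ) * (‖β - β'‖ * ‖X p‖)) with hc
  have hc0 : 0 ≤ c := by positivity
  have hκβ := gker_integrable X β hg p
  have hκβ' := gker_integrable X β' hg p
  have hmeasS : MeasurableSet {ω : Fin d → ℝ | R < ‖ω‖} :=
    measurableSet_lt measurable_const measurable_norm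
  have hstep1 : |Fv X β g p - Fv X β' g p| ≤
      ∫ ω : Fin d → ℝ, ‖g ω * Complex.exp (2 * π * Complex.I *
          ((∑ j, (β j * X p j) * ω j : ℝ) : ℂ))
        - g ω * Complex.exp (2 * π * Complex.I *
          ((∑ j, (β' j * X p j) * ω j : ℝ) : ℂ))‖ := by
    rw [Fv, Fv, ← Complex.sub_re]
    refine (Complex.abs_re_le_norm _).trans ?_
    rw [← integral_sub hκβ hκβ']
    exact norm_integral_le_integral_norm _
  refine hstep1.trans ?_
  have hptwise : ∀ ω : Fin d → ℝ,
      ‖g ω * Complex.exp (2 * π * Complex.I * ((∑ j, (β j * X p j) * ω j : ℝ) : ℂ))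
        - g ω * Complex.exp (2 * π * Complex.I * ((∑ j, (β' j * X p j) * ω j : ℝ) : ℂ))‖
      ≤ ‖g ω‖ * (c * R)
        + 2 * Set.indicator {ω : Fin d → ℝ | R < ‖ω‖} (fun ω => ‖g ω‖) ω := by
    intro ω
    have hfactor : g ω * Complex.exp (2 * π * Complex.I * ((∑ j, (β j * X p j) * ω j : ℝ) : ℂ))
        - g ω * Complex.exp (2 * π * Complex.I * ((∑ j, (β' j * X p j) * ω j : ℝ) : ℂ))
        = g ω * (Complex.exp (2 * π * Complex.I * ((∑ j, (β j * X p j) * ω j : ℝ) : ℂ))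
            - Complex.exp (2 * π * Complex.I * ((∑ j, (β' j * X p j) * ω j : ℝ) : ℂ))) := by
      ring
    rw [hfactor, norm_mul]
    have hΔ : |(∑ j, (β j * X p j) * ω j) - (∑ j, (β' j * X p j) * ω j)|
        ≤ (d:ℝ) * (‖β - β'‖ * ‖X p‖) * ‖ω‖ := by
      rw [← Finset.sum_sub_distrib]
      refine (Finset.abs_sum_le_sum_abs _ _).trans ?_
      have hterm : ∀ j : Fin d, |(β j * X p j) * ω j - (β' j * X p j) * ω j|
          ≤ ‖β - β'‖ * ‖X p‖ * ‖ω‖ := by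
        intro j
        have he : (β j * X p j) * ω j - (β' j * X p j) * ω j
            = ((β j - β' j) * X p j) * ω j := by ring
        rw [he, abs_mul, abs_mul]
        have h1 : |β j - β' j| ≤ ‖β - β'‖ := by
          have := norm_le_pi_norm (β - β') j
          simpa [Real.norm_eq_abs] using this
        have h2 : |X p j| ≤ ‖X p‖ := by
          have := norm_le_pi_norm (X p) j
          simpa [Real.norm_eq_abs] using this
        have h3 : |ω j| ≤ ‖ω‖ := by
          have := norm_le_pi_norm ω j
          simpa [Real.norm_eq_abs] using this
        have hnn : (0:ℝ) ≤ ‖β - β'‖ * ‖X p‖ := mul_nonneg (norm_nonneg _) (norm_nonneg _)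
        exact mul_le_mul (mul_le_mul h1 h2 (abs_nonneg _) (norm_nonneg _)) h3
          (abs_nonneg _) hnn
      refine (Finset.sum_le_sum (fun j _ => hterm j)).trans ?_
      rw [Finset.sum_const, Finset.card_univ, Fintype.card_fin, nsmul_eq_mul]
      ring_nf
      exact le_rfl
    have hexp := aux_expdiff (∑ j, (β j * X p j) * ω j) (∑ j, (β' j * X p j) * ω j)
    by_cases hRω : ‖ω‖ ≤ R
    · have hmin : min 2 (4 * π * |(∑ j, (β j * X p j) * ω j) - (∑ j, (β' j * X p j) * ω j)|)
          ≤ c * R := by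
        refine (min_le_right _ _).trans ?_
        rw [hc]
        have h4 : 4 * π * |(∑ j, (β j * X p j) * ω j) - (∑ j, (β' j * X p j) * ω j)|
            ≤ 4 * π * ((d:ℝ) * (‖β - β'‖ * ‖X p‖) * ‖ω‖) := by
          apply mul_le_mul_of_nonneg_left hΔ (by positivity)
        refine h4.trans ?_
        have h5 : (d:ℝ) * (‖β - β'‖ * ‖X p‖) * ‖ω‖ ≤ (d:ℝ) * (‖β - β'‖ * ‖X p‖) * R :=
          mul_le_mul_of_nonneg_left hRω (by positivity)
        nlinarith [Real.pi_pos]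
      have hind : 0 ≤ Set.indicator {ω : Fin d → ℝ | R < ‖ω‖} (fun ω => ‖g ω‖) ω :=
        Set.indicator_apply_nonneg (fun _ => norm_nonneg _)
      have := mul_le_mul_of_nonneg_left (hexp.trans hmin) (norm_nonneg (g ω))
      linarith
    · push_neg at hRω
      have hind : Set.indicator {ω : Fin d → ℝ | R < ‖ω‖} (fun ω => ‖g ω‖) ω = ‖g ω‖ :=
        Set.indicator_of_mem (show ω ∈ {ω : Fin d → ℝ | R < ‖ω‖} from hRω) _
      have hmin2 : min 2 (4 * π * |(∑ j, (β j * X p j) * ω j) - (∑ j, (β' j * X p j) * ω j)|)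
          ≤ 2 := min_le_left _ _
      have := mul_le_mul_of_nonneg_left (hexp.trans hmin2) (norm_nonneg (g ω))
      have hnn : 0 ≤ ‖g ω‖ * (c * R) := by positivity
      rw [hind]
      linarith
  have hint1 : Integrable (fun ω : Fin d → ℝ =>
      ‖g ω * Complex.exp (2 * π * Complex.I * ((∑ j, (β j * X p j) * ω j : ℝ) : ℂ))
        - g ω * Complex.exp (2 * π * Complex.I * ((∑ j, (β' j * X p j) * ω j : ℝ) : ℂ))‖)
      volume := (hκβ.sub hκβ').norm
  have hint2 : Integrable (fun ω : Fin d → ℝ => ‖g ω‖ * (c * R)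
      + 2 * Set.indicator {ω : Fin d → ℝ | R < ‖ω‖} (fun ω => ‖g ω‖) ω) volume :=
    (hg.norm.mul_const _).add ((hg.norm.indicator hmeasS).const_mul 2)
  refine (integral_mono hint1 hint2 hptwise).trans (le_of_eq ?_)
  rw [integral_add (hg.norm.mul_const _) ((hg.norm.indicator hmeasS).const_mul 2),
    integral_mul_const, MeasureTheory.integral_const_mul]

end Aux

def Sset {d : ℕ} {Ω : Type} [MeasureSpace Ω]
    (k : (Fin d → ℝ) → ℝ) (X : Ω → Fin d → ℝ) (Y : Ω → ℝ)
    (β : Fin d → ℝ) (lam : ℝ) : Set ℝ :=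
  {r : ℝ | ∃ g : (Fin d → ℝ) → ℂ,
    Integrable g volume ∧
    (∀ ω, g (-ω) = starRingEnd ℂ (g ω)) ∧
    Integrable (fun ω : Fin d → ℝ => ‖g ω‖ ^ 2 / k ω) volume ∧
    r = (∫ p, (Y p - Fv X β g p) ^ 2 ∂volume)
        + lam * ∫ ω : Fin d → ℝ, ‖g ω‖ ^ 2 / k ω}

lemma Jobj_eq {d : ℕ} {Ω : Type} [MeasureSpace Ω]
    (k : (Fin d → ℝ) → ℝ) (X : Ω → Fin d → ℝ) (Y : Ω → ℝ)
    (β : Fin d → ℝ) (lam : ℝ) :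
    Jobj k X Y β lam = sInf (Sset k X Y β lam) := rfl

set_option maxHeartbeats 1000000 in
/-- for every `λ > 0`, the map `β ↦ 𝒥(β, λ)` is continuous on `ℝᵈ`. -/
theorem stmt9 {d : ℕ} (hd : 1 ≤ d)
    (k : (Fin d → ℝ) → ℝ) (hk_int : Integrable k)
    (hk_even : ∀ ω, k (-ω) = k ω)
    (hk_pos : ∀ᵐ ω ∂(volume : Measure (Fin d → ℝ)), 0 < k ω)
    (hk_one : ∫ ω : Fin d → ℝ, k ω = 1)
    {Ω : Type} [MeasureSpace Ω] [IsProbabilityMeasure (volume : Measure Ω)]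
    (X : Ω → Fin d → ℝ) (Y : Ω → ℝ) (hX : Measurable X) (hY : Measurable Y)
    (hY2 : Integrable (fun p => (Y p) ^ 2) volume)
    (lam : ℝ) (hlam : 0 < lam) :
    Continuous (fun β : Fin d → ℝ => Jobj k X Y β lam) := by
  classical
  -- basic constants
  set EY2 : ℝ := ∫ p, (Y p) ^ 2 with hEY2def
  have hEY2nn : 0 ≤ EY2 := integral_nonneg (fun p => sq_nonneg _)
  set B : ℝ := (EY2 + 1) / lam with hBdef
  have hB0 : 0 ≤ B := div_nonneg (by linarith only [hEY2nn]) hlam.le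
  set M : ℝ := (B + 1) / 2 with hMdef
  have hM0 : 0 < M := by rw [hMdef]; linarith only [hB0]
  -- integrability of |Y|
  have hYabs : Integrable (fun p => |Y p|) (volume : Measure Ω) := by
    refine Integrable.mono' (hY2.add (integrable_const 1)) hY.abs.aestronglyMeasurable ?_
    filter_upwards with p
    rw [Real.norm_eq_abs, abs_abs]
    show |Y p| ≤ Y p ^ 2 + 1
    nlinarith only [sq_nonneg (|Y p| - 1), sq_abs (Y p)]
  set G : Ω → ℝ := fun p => 2 * |Y p| + 2 * M with hGdef
  have hGint : Integrable G (volume : Measure Ω) := (hYabs.const_mul 2).add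
    (integrable_const (2 * M))
  have hGnn : ∀ p, 0 ≤ G p := by
    intro p
    rw [hGdef]; dsimp only
    linarith only [abs_nonneg (Y p), hM0]
  set C : ℝ := ∫ p, G p with hCdef
  have hC0 : 0 ≤ C := integral_nonneg hGnn
  -- basic facts about the sets
  have hbdd : ∀ β : Fin d → ℝ, BddBelow (Sset k X Y β lam) := by
    intro β
    refine ⟨0, fun r hr => ?_⟩
    obtain ⟨g, hg, hsym, hgk, rfl⟩ := hr
    have h1 : 0 ≤ ∫ p, (Y p - Fv X β g p) ^ 2 ∂volume := integral_nonneg (fun p => sq_nonneg _)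
    have h2 : 0 ≤ ∫ ω : Fin d → ℝ, ‖g ω‖ ^ 2 / k ω := by
      apply integral_nonneg_of_ae
      filter_upwards [hk_pos] with ω hk
      exact div_nonneg (by positivity) hk.le
    have h3 := mul_nonneg hlam.le h2
    linarith only [h1, h3]
  have hmem0 : ∀ β : Fin d → ℝ, EY2 ∈ Sset k X Y β lam := by
    intro β
    refine ⟨fun _ => 0, integrable_zero _ _ _, by simp, by simp, ?_⟩
    have hFv0 : ∀ p, Fv X β (fun _ => 0) p = 0 := by
      intro p
      rw [Fv]
      simp
    simp only [hFv0, sub_zero, norm_zero]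
    simp [hEY2def]
  have hJle : ∀ β : Fin d → ℝ, sInf (Sset k X Y β lam) ≤ EY2 :=
    fun β => csInf_le (hbdd β) (hmem0 β)
  -- continuity
  rw [Metric.continuous_iff]
  intro β₀ ε hε
  set ε2 : ℝ := ε / (8 * (C + 1)) with hε2def
  have hε2pos : 0 < ε2 := div_pos hε (by linarith only [hC0])
  set t : ℝ := ε2 / (B + 1) with htdef
  have ht : 0 < t := div_pos hε2pos (by linarith only [hB0])
  obtain ⟨n, hn1, hnk⟩ := aux_tail hk_int (measurable_norm) (mul_pos ht hε2pos)
  set R : ℝ := (n : ℝ) with hRdef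
  have hR0 : 0 < R := by
    rw [hRdef]; exact_mod_cast hn1
  set ε3 : ℝ := ε / (16 * M) with hε3def
  have hε3pos : 0 < ε3 := div_pos hε (by linarith only [hM0])
  obtain ⟨m, hm1, hmG⟩ := aux_tail hGint (hX.norm) hε3pos
  set T : ℝ := (m : ℝ) with hTdef
  have hT0 : (0:ℝ) ≤ T := by rw [hTdef]; positivity
  set c0 : ℝ := 4 * π * ((d:ℝ) * (T * (R * M))) with hc0def
  have hc00 : 0 ≤ c0 := by
    rw [hc0def]
    have h1 := Real.pi_pos
    have h2 : (0:ℝ) ≤ (d:ℝ) := Nat.cast_nonneg d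
    have h3 := mul_nonneg hT0 (mul_nonneg hR0.le hM0.le)
    nlinarith only [h1, h2, h3, mul_nonneg h2 h3]
  set δ : ℝ := ε / (8 * (c0 * (C + 1) + 1)) with hδdef
  have hδpos : 0 < δ := by
    refine div_pos hε ?_
    have h1 := mul_nonneg hc00 (by linarith only [hC0] : (0:ℝ) ≤ C + 1)
    linarith only [h1]
  clear_value EY2 B M G C ε2 t R ε3 T c0 δ
  refine ⟨δ, hδpos, ?_⟩
  -- uniform L¹ bound
  have hL1g : ∀ g : (Fin d → ℝ) → ℂ, Integrable g volume →
      Integrable (fun ω : Fin d → ℝ => ‖g ω‖ ^ 2 / k ω) volume →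
      (∫ ω : Fin d → ℝ, ‖g ω‖ ^ 2 / k ω) ≤ B → (∫ ω : Fin d → ℝ, ‖g ω‖) ≤ M := by
    intro g hg hgk hNg
    have h := aux_amgm hk_int hk_pos hg hgk MeasurableSet.univ one_pos
    simp only [Set.indicator_univ] at h
    rw [hk_one] at h
    rw [hMdef]
    linarith only [h, hNg]
  -- uniform tail bound
  have hTailG : ∀ g : (Fin d → ℝ) → ℂ, Integrable g volume →
      Integrable (fun ω : Fin d → ℝ => ‖g ω‖ ^ 2 / k ω) volume →
      (∫ ω : Fin d → ℝ, ‖g ω‖ ^ 2 / k ω) ≤ B →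
      (∫ ω : Fin d → ℝ, Set.indicator {ω : Fin d → ℝ | R < ‖ω‖} (fun ω => ‖g ω‖) ω) ≤ ε2 := by
    intro g hg hgk hNg
    have hmeasS : MeasurableSet {ω : Fin d → ℝ | R < ‖ω‖} :=
      measurableSet_lt measurable_const measurable_norm
    have h := aux_amgm hk_int hk_pos hg hgk hmeasS ht
    refine h.trans ?_
    have e1 : t * (B + 1) = ε2 := by
      rw [htdef]; field_simp
    have h1 : t * (∫ ω : Fin d → ℝ, ‖g ω‖ ^ 2 / k ω) ≤ t * B :=
      mul_le_mul_of_nonneg_left hNg ht.le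
    have h2 : (1/t) * (∫ ω, Set.indicator {ω : Fin d → ℝ | R < ‖ω‖} k ω) ≤ (1/t) * (t * ε2) :=
      mul_le_mul_of_nonneg_left hnk.le (one_div_pos.mpr ht).le
    have e2 : (1/t) * (t * ε2) = ε2 := by field_simp
    linarith only [h1, h2, e1, e2, ht]
  -- key uniform estimate
  have hkey : ∀ β β' : Fin d → ℝ, ‖β - β'‖ < δ →
      ∀ g : (Fin d → ℝ) → ℂ, Integrable g volume →
      Integrable (fun ω : Fin d → ℝ => ‖g ω‖ ^ 2 / k ω) volume →
      (∫ ω : Fin d → ℝ, ‖g ω‖ ^ 2 / k ω) ≤ B →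
      (∫ p, (Y p - Fv X β g p) ^ 2 ∂volume)
        ≤ (∫ p, (Y p - Fv X β' g p) ^ 2 ∂volume) + ε / 2 := by
    intro β β' hββ' g hg hgk hNg
    have hgM : (∫ ω : Fin d → ℝ, ‖g ω‖) ≤ M := hL1g g hg hgk hNg
    have hgM0 : 0 ≤ ∫ ω : Fin d → ℝ, ‖g ω‖ := integral_nonneg (fun _ => norm_nonneg _)
    have hTg : (∫ ω : Fin d → ℝ,
        Set.indicator {ω : Fin d → ℝ | R < ‖ω‖} (fun ω => ‖g ω‖) ω) ≤ ε2 :=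
      hTailG g hg hgk hNg
    set A1 : ℝ := c0 * ‖β - β'‖ + 2 * ε2 with hA1def
    clear_value A1
    have hA10 : 0 ≤ A1 := by
      rw [hA1def]
      have h1 := mul_nonneg hc00 (norm_nonneg (β - β'))
      linarith only [h1, hε2pos]
    have hTmeas : MeasurableSet {p : Ω | T < ‖X p‖} :=
      measurableSet_lt measurable_const (hX.norm)
    have hE1 := Err_integrand_integrable X hX hY hY2 β hg
    have hE2 := Err_integrand_integrable X hX hY hY2 β' hg
    have hWint : Integrable (fun p =>
        A1 * G p + 2 * M * Set.indicator {p : Ω | T < ‖X p‖} G p) volume :=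
      (hGint.const_mul A1).add ((hGint.indicator hTmeas).const_mul (2 * M))
    have hpt : ∀ p, (Y p - Fv X β g p) ^ 2 - (Y p - Fv X β' g p) ^ 2 ≤
        A1 * G p + 2 * M * Set.indicator {p : Ω | T < ‖X p‖} G p := by
      intro p
      have hDF := Fv_diff_le X β β' hg p hR0
      have hF1 : |Fv X β g p| ≤ M := (Fv_le X β g p).trans hgM
      have hF2 : |Fv X β' g p| ≤ M := (Fv_le X β' g p).trans hgM
      have hGp : G p = 2 * |Y p| + 2 * M := by rw [hGdef]
      set u : ℝ := Fv X β g p with hudef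
      set v : ℝ := Fv X β' g p with hvdef
      set L1 : ℝ := ∫ ω : Fin d → ℝ, ‖g ω‖ with hL1def
      set Tg : ℝ := ∫ ω : Fin d → ℝ,
        Set.indicator {ω : Fin d → ℝ | R < ‖ω‖} (fun ω => ‖g ω‖) ω with hTgdef
      set y : ℝ := Y p with hydef
      set x : ℝ := ‖X p‖ with hxdef
      set b : ℝ := ‖β - β'‖ with hbdef2
      set w : ℝ := Set.indicator {p : Ω | T < ‖X p‖} G p with hwdef
      set Gp : ℝ := G p with hGpdef
      clear_value u v L1 Tg y x b w Gp
      have hx0 : 0 ≤ x := by rw [hxdef]; exact norm_nonneg _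
      have hb0 : 0 ≤ b := by rw [hbdef2]; exact norm_nonneg _
      have hsum : |(y - u) + (y - v)| ≤ Gp := by
        rw [hGp]
        apply abs_le.mpr
        constructor <;>
          linarith only [(abs_le.mp hF1).1, (abs_le.mp hF1).2, (abs_le.mp hF2).1,
            (abs_le.mp hF2).2, neg_abs_le y, le_abs_self y]
      have hGp0 : 0 ≤ Gp := by rw [hGpdef]; exact hGnn p
      have hexpand : (y - u) ^ 2 - (y - v) ^ 2 = (v - u) * ((y - u) + (y - v)) := by
        ring
      by_cases hXT : T < x
      · have hindm : w = Gp := by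
          rw [hwdef, hGpdef]
          refine Set.indicator_of_mem ?_ G
          show T < ‖X p‖
          rw [← hxdef]
          exact hXT
        rw [hexpand, hindm]
        have hDF2M : |v - u| ≤ 2 * M := by
          apply abs_le.mpr
          constructor <;>
            linarith only [(abs_le.mp hF1).1, (abs_le.mp hF1).2, (abs_le.mp hF2).1,
              (abs_le.mp hF2).2]
        have huv := mul_abs_le' hDF2M hsum
        linarith only [huv, mul_nonneg hA10 hGp0]
      · have hindm : w = 0 := by
          rw [hwdef]
          refine Set.indicator_of_notMem ?_ G
          simp only [Set.mem_setOf_eq, ← hxdef]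
          exact hXT
        push_neg at hXT
        have hstep : |v - u| ≤ A1 := by
          rw [abs_sub_comm]
          refine hDF.trans ?_
          have hbase : L1 * (b * x) ≤ M * (T * b) := by
            linarith only [mul_nonneg (sub_nonneg.mpr hgM) (mul_nonneg hb0 hx0),
              mul_nonneg (mul_nonneg hM0.le hb0) (sub_nonneg.mpr hXT)]
          have hT1 : L1 * (4 * π * ((d:ℝ) * (b * x)) * R) ≤ c0 * b := by
            have he1 : L1 * (4 * π * ((d:ℝ) * (b * x)) * R)
                = (4 * π * (d:ℝ) * R) * (L1 * (b * x)) := by ring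
            have he2 : c0 * b = (4 * π * (d:ℝ) * R) * (M * (T * b)) := by
              rw [hc0def]; ring
            rw [he1, he2]
            refine mul_le_mul_of_nonneg_left hbase ?_
            have h1 : (0:ℝ) ≤ 4 * π := by positivity
            exact mul_nonneg (mul_nonneg h1 (Nat.cast_nonneg d)) hR0.le
          rw [hA1def]
          linarith only [hT1, hTg]
        rw [hexpand, hindm]
        have huv := mul_abs_le' hstep hsum
        linarith only [huv]
    have hsub : (∫ p, (Y p - Fv X β g p) ^ 2 ∂volume) - (∫ p, (Y p - Fv X β' g p) ^ 2 ∂volume)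
        = ∫ p, ((Y p - Fv X β g p) ^ 2 - (Y p - Fv X β' g p) ^ 2) ∂volume :=
      (integral_sub hE1 hE2).symm
    have hint : (∫ p, ((Y p - Fv X β g p) ^ 2 - (Y p - Fv X β' g p) ^ 2) ∂volume)
        ≤ ∫ p, (A1 * G p + 2 * M * Set.indicator {p : Ω | T < ‖X p‖} G p) ∂volume :=
      integral_mono (hE1.sub hE2) hWint hpt
    have hWval : (∫ p, (A1 * G p + 2 * M * Set.indicator {p : Ω | T < ‖X p‖} G p) ∂volume)
        = A1 * C + 2 * M * (∫ p, Set.indicator {p : Ω | T < ‖X p‖} G p) := by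
      rw [integral_add (hGint.const_mul A1) ((hGint.indicator hTmeas).const_mul (2 * M)),
        MeasureTheory.integral_const_mul, MeasureTheory.integral_const_mul, hCdef]
    have hterm3 : 2 * M * (∫ p, Set.indicator {p : Ω | T < ‖X p‖} G p) ≤ ε / 8 := by
      have h1 : 2 * M * (∫ p, Set.indicator {p : Ω | T < ‖X p‖} G p) ≤ 2 * M * ε3 :=
        mul_le_mul_of_nonneg_left hmG.le (by linarith only [hM0])
      have e3 : 2 * M * ε3 = ε / 8 := by
        rw [hε3def]
        field_simp
        ring
      linarith only [h1, e3]
    have hterm2 : 2 * ε2 * C ≤ ε / 4 := by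
      have e2 : ε2 * (8 * (C + 1)) = ε := by
        rw [hε2def]
        field_simp
      linarith only [e2, hε2pos.le]
    have hterm1 : c0 * ‖β - β'‖ * C ≤ ε / 8 := by
      have e1 : δ * (8 * (c0 * (C + 1) + 1)) = ε := by
        rw [hδdef]
        field_simp
      have h1 : c0 * ‖β - β'‖ * C ≤ c0 * δ * C := by
        apply mul_le_mul_of_nonneg_right _ hC0
        exact mul_le_mul_of_nonneg_left hββ'.le hc00
      linarith only [h1, e1, mul_nonneg hc00 hδpos.le, hδpos.le]
    have hA1C : A1 * C = c0 * ‖β - β'‖ * C + 2 * ε2 * C := by rw [hA1def]; ring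
    linarith only [hsub, hint, hWval, hterm1, hterm2, hterm3, hA1C]
  -- conclude
  intro β hdist
  rw [Real.dist_eq, abs_sub_lt_iff]
  have hδd : ∀ β1 β2 : Fin d → ℝ, dist β1 β2 < δ →
      sInf (Sset k X Y β1 lam) ≤ sInf (Sset k X Y β2 lam) + ε / 2 := by
    intro β1 β2 h12
    have hnorm : ‖β1 - β2‖ < δ := by rwa [← dist_eq_norm]
    have hlb : ∀ r ∈ Sset k X Y β2 lam, sInf (Sset k X Y β1 lam) - ε / 2 ≤ r := by
      intro r hr
      obtain ⟨g, hg, hsym, hgk, rfl⟩ := hr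
      have hNgnn : 0 ≤ ∫ ω : Fin d → ℝ, ‖g ω‖ ^ 2 / k ω := by
        apply integral_nonneg_of_ae
        filter_upwards [hk_pos] with ω hk
        exact div_nonneg (by positivity) hk.le
      by_cases hNg : (∫ ω : Fin d → ℝ, ‖g ω‖ ^ 2 / k ω) ≤ B
      · have hmem : ((∫ p, (Y p - Fv X β1 g p) ^ 2 ∂volume)
            + lam * ∫ ω : Fin d → ℝ, ‖g ω‖ ^ 2 / k ω) ∈ Sset k X Y β1 lam :=
          ⟨g, hg, hsym, hgk, rfl⟩
        have h1 := csInf_le (hbdd β1) hmem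
        have h2 := hkey β1 β2 hnorm g hg hgk hNg
        linarith only [h1, h2]
      · push_neg at hNg
        have h1 : lam * B < lam * (∫ ω : Fin d → ℝ, ‖g ω‖ ^ 2 / k ω) :=
          (mul_lt_mul_iff_right₀ hlam).mpr hNg
        have h2 : lam * B = EY2 + 1 := by
          rw [hBdef]
          field_simp
        have h3 : 0 ≤ ∫ p, (Y p - Fv X β2 g p) ^ 2 ∂volume :=
          integral_nonneg (fun p => sq_nonneg _)
        have h4 := hJle β1
        linarith only [h1, h2, h3, h4, hε]
    have h5 := le_csInf ⟨EY2, hmem0 β2⟩ hlb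
    linarith only [h5]
  constructor
  · simp only [Jobj_eq]
    have h6 := hδd β β₀ hdist
    linarith only [h6, hε]
  · simp only [Jobj_eq]
    have h6 := hδd β₀ β (by rwa [dist_comm])
    linarith only [h6, hε]
end
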